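/- arXiv:1909.00551 — 2 statements merged into one kernel-verified Lean document; each statement's English description precedes it below -/
import Mathlib

section
/- Let B be an n × m real matrix, b ∈ R^n, A = B^T B, and 0 < μ < 2/λ_max(A). The iteration C^{(α+1)} = (I − μA) C^{(α)} + μ B^T b converges as α → ∞ to C^{(∞)} = A⁺ B^T b + (I − A⁺A) C^{(0)}. -/
open Matrix

/-- Let `A = Bᵀ B`, `0 < μ < 2 / λ_max(A)`, and `Ap` the Moore–Penrose pseudoinverse
of `A`. The iteration `C (α+1) = (I - μ A) (C α) + μ Bᵀ b` converges as `α → ∞` to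
`Ap Bᵀ b + (I - Ap A) (C 0)`. -/
theorem ipia_iteration_converges
    (n m : ℕ) (B : Matrix (Fin n) (Fin m) ℝ) (b : Fin n → ℝ)
    (A Ap : Matrix (Fin m) (Fin m) ℝ) (hAdef : A = Bᵀ * B)
    (hp1 : A * Ap * A = A) (hp2 : Ap * A * Ap = Ap)
    (hp3 : (A * Ap)ᵀ = A * Ap) (hp4 : (Ap * A)ᵀ = Ap * A)
    (μ lmax : ℝ) (hlmax_pos : 0 < lmax)
    (hmax_eig : ∃ v : Fin m → ℝ, v ≠ 0 ∧ A.mulVec v = lmax • v)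
    (hmax : ∀ (l : ℝ) (v : Fin m → ℝ), v ≠ 0 → A.mulVec v = l • v → l ≤ lmax)
    (hμ0 : 0 < μ) (hμ2 : μ < 2 / lmax)
    (C : ℕ → (Fin m → ℝ))
    (hC : ∀ α : ℕ, C (α + 1) = (1 - μ • A).mulVec (C α) + μ • Bᵀ.mulVec b) :
    Filter.Tendsto C Filter.atTop
      (nhds (Ap.mulVec (Bᵀ.mulVec b) + (1 - Ap * A).mulVec (C 0))) := by
  have hAsymm : Aᵀ = A := by rw [hAdef, transpose_mul, transpose_transpose]
  have hA : A.IsHermitian := by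
    unfold Matrix.IsHermitian
    ext i j
    simp only [conjTranspose_apply, star_trivial]
    exact congrFun (congrFun hAsymm i) j
  have hPSD : A.PosSemidef := by
    have h := Matrix.posSemidef_conjTranspose_mul_self B
    have hBt : Bᴴ = Bᵀ := by ext i j; simp [conjTranspose_apply]
    rwa [hBt, ← hAdef] at h
  -- make `t = Bᵀ b` and the limit `L` opaque
  obtain ⟨t, ht⟩ : ∃ t, Bᵀ *ᵥ b = t := ⟨_, rfl⟩
  simp only [ht] at hC ⊢
  obtain ⟨L, hLdef⟩ : ∃ L, Ap *ᵥ t + (1 - Ap * A) *ᵥ C 0 = L := ⟨_, rfl⟩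
  rw [hLdef]
  -- key projection identity : A * Ap * Bᵀ = Bᵀ
  have hproj : (1 - A * Ap) * A = 0 := by
    rw [Matrix.sub_mul, Matrix.one_mul, hp1, sub_self]
  have hNzero : (1 - A * Ap) * Bᵀ = 0 := by
    set N : Matrix (Fin m) (Fin n) ℝ := (1 - A * Ap) * Bᵀ with hN
    have hNH : Nᴴ = Nᵀ := by ext i j; simp [conjTranspose_apply]
    have h1 : N * Nᵀ = ((1 - A * Ap) * A) * (1 - A * Ap)ᵀ := by
      rw [hN, transpose_mul, transpose_transpose, hAdef]
      simp only [Matrix.mul_assoc]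
    have h2 : N * Nᴴ = 0 := by rw [hNH, h1, hproj, Matrix.zero_mul]
    exact Matrix.self_mul_conjTranspose_eq_zero.mp h2
  have hBtmul : (A * Ap) * Bᵀ = Bᵀ := by
    have h := hNzero
    rw [Matrix.sub_mul, Matrix.one_mul] at h
    exact (sub_eq_zero.mp h).symm
  have hABt : (A * Ap) *ᵥ t = t := by
    rw [← ht, mulVec_mulVec, hBtmul]
  -- L is a fixed point : A *ᵥ L = t
  have hfix : A *ᵥ L = t := by
    have h0 : A * (1 - Ap * A) = 0 := by
      rw [Matrix.mul_sub, Matrix.mul_one, ← Matrix.mul_assoc, hp1, sub_self]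
    rw [← hLdef, mulVec_add, mulVec_mulVec, mulVec_mulVec, h0, zero_mulVec, add_zero]
    -- goal may be `(A * Ap) *ᵥ t = t` stated as `A * Ap *ᵥ t = t`
    exact hABt
  -- the initial error lies in the range of A
  obtain ⟨w, hw⟩ : ∃ w, Apᵀ *ᵥ (C 0 - Ap *ᵥ t) = w := ⟨_, rfl⟩
  have he0 : C 0 - L = A *ᵥ w := by
    have hApA : A * Apᵀ = Ap * A := by
      rw [← hp4, transpose_mul, hAsymm]
    rw [← hw, mulVec_mulVec, hApA, mulVec_sub, mulVec_mulVec, Matrix.mul_assoc,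
      ← Matrix.mul_assoc Ap A Ap, hp2]
    rw [← hLdef, sub_mulVec, one_mulVec]
    abel
  -- eigen data
  set ev : Fin m → ℝ := hA.eigenvalues with hev
  set V := hA.eigenvectorBasis with hV
  have hev_nonneg : ∀ j, 0 ≤ ev j := fun j => hPSD.eigenvalues_nonneg j
  have hAV : ∀ j, A *ᵥ ⇑(V j) = ev j • ⇑(V j) := fun j => hA.mulVec_eigenvectorBasis j
  have hVne : ∀ j, ⇑(V j) ≠ (0 : Fin m → ℝ) := by
    intro j hj
    have h0 : V j = (0 : EuclideanSpace ℝ (Fin m)) := WithLp.ofLp_injective 2 hj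
    exact V.orthonormal.ne_zero j h0
  have hev_le : ∀ j, ev j ≤ lmax := fun j => hmax (ev j) (V j) (hVne j) (hAV j)
  have hcontr : ∀ j, ev j ≠ 0 → |1 - μ * ev j| < 1 := by
    intro j hj
    have hpos : 0 < ev j := lt_of_le_of_ne (hev_nonneg j) (Ne.symm hj)
    have h2 : μ * lmax < 2 := (lt_div_iff₀ hlmax_pos).mp hμ2
    have hle : μ * ev j ≤ μ * lmax :=
      mul_le_mul_of_nonneg_left (hev_le j) (le_of_lt hμ0)
    have h1 : 0 < μ * ev j := mul_pos hμ0 hpos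
    rw [abs_lt]
    constructor <;> nlinarith
  -- coefficients
  set c : Fin m → ℝ := fun j => V.repr (WithLp.toLp 2 w) j with hc
  have hwsum : w = ∑ j, c j • ⇑(V j) := by
    have h := congrArg WithLp.ofLp (V.sum_repr (WithLp.toLp 2 w))
    rw [WithLp.ofLp_sum] at h
    simp only [WithLp.ofLp_smul] at h
    exact h.symm
  -- mulVec of a finite sum of scaled eigenvectors
  have hAsum : ∀ (d : Fin m → ℝ),
      A *ᵥ (∑ j, d j • ⇑(V j)) = ∑ j, (ev j * d j) • ⇑(V j) := by
    intro d
    rw [← A.mulVecLin_apply, map_sum]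
    refine Finset.sum_congr rfl fun j _ => ?_
    rw [LinearMap.map_smul, A.mulVecLin_apply, hAV j, smul_smul, mul_comm]
  -- closed form for the iterates
  have hform : ∀ α : ℕ, C α = L + ∑ j, ((1 - μ * ev j) ^ α * (ev j * c j)) • ⇑(V j) := by
    intro α
    induction α with
    | zero =>
      have h1 : C 0 = L + A *ᵥ w := by rw [← he0]; abel
      rw [h1, hwsum, hAsum]
      congr 1
      refine Finset.sum_congr rfl fun j _ => ?_
      rw [pow_zero, one_mul]
    | succ α ih =>
      have hAe : A *ᵥ (∑ j, ((1 - μ * ev j) ^ α * (ev j * c j)) • ⇑(V j))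
          = ∑ j, (ev j * ((1 - μ * ev j) ^ α * (ev j * c j))) • ⇑(V j) := hAsum _
      rw [hC α, ih, sub_mulVec, one_mulVec, smul_mulVec, mulVec_add, hfix, hAe,
        smul_add, Finset.smul_sum]
      have hS : (∑ j, ((1 - μ * ev j) ^ α * (ev j * c j)) • ⇑(V j))
          - (∑ j, μ • ((ev j * ((1 - μ * ev j) ^ α * (ev j * c j))) • ⇑(V j)))
          = ∑ j, ((1 - μ * ev j) ^ (α + 1) * (ev j * c j)) • ⇑(V j) := by
        rw [← Finset.sum_sub_distrib]
        refine Finset.sum_congr rfl fun j _ => ?_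
        rw [smul_smul, ← sub_smul]
        congr 1
        ring
      have habel : L + (∑ j, ((1 - μ * ev j) ^ α * (ev j * c j)) • ⇑(V j))
          - (μ • t + ∑ j, μ • ((ev j * ((1 - μ * ev j) ^ α * (ev j * c j))) • ⇑(V j)))
          + μ • t
          = L + ((∑ j, ((1 - μ * ev j) ^ α * (ev j * c j)) • ⇑(V j))
              - (∑ j, μ • ((ev j * ((1 - μ * ev j) ^ α * (ev j * c j))) • ⇑(V j)))) := by
        abel
      rw [habel, hS]
  -- convergence, coordinatewise
  rw [tendsto_pi_nhds]
  intro i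
  have hformi : ∀ α : ℕ,
      C α i = L i + ∑ j, (1 - μ * ev j) ^ α * (ev j * c j) * (V j) i := by
    intro α
    rw [hform α]
    simp [Finset.sum_apply, mul_comm]
  simp only [funext fun α => hformi α]
  have hlim : Filter.Tendsto
      (fun α : ℕ => ∑ j, (1 - μ * ev j) ^ α * (ev j * c j) * (V j) i)
      Filter.atTop (nhds 0) := by
    have h0 : (0 : ℝ) = ∑ _j : Fin m, (0 : ℝ) := by simp
    rw [h0]
    refine tendsto_finset_sum _ fun j _ => ?_
    by_cases hj : ev j = 0
    · simp only [hj, zero_mul, mul_zero, zero_mul]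
      exact tendsto_const_nhds
    · have hgeo : Filter.Tendsto (fun α : ℕ => (1 - μ * ev j) ^ α) Filter.atTop (nhds 0) :=
        tendsto_pow_atTop_nhds_zero_of_abs_lt_one (hcontr j hj)
      have h := hgeo.mul_const ((ev j * c j) * (V j) i)
      rw [zero_mul] at h
      refine h.congr fun α => by ring
  have h := (tendsto_const_nhds (x := L i) (f := Filter.atTop (α := ℕ))).add hlim
  rw [add_zero] at h
  exact h
end

section
/- Let B be an n × m real matrix, b ∈ R^n, A = B^T B, and 0 < μ < 2/λ_max(A). If the initial value C^{(0)} = 0, then the iteration C^{(α+1)} = (I − μA) C^{(α)} + μ B^T b converges to A⁺ B^T b, which is the solution of A X = B^T b with minimum Euclidean norm. -/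
open Matrix

lemma aux_mul_transpose_self_eq_zero {k l : ℕ} (M : Matrix (Fin k) (Fin l) ℝ)
    (h : M * Mᵀ = 0) : M = 0 := by
  have h2 : (Mᵀ)ᴴ * Mᵀ = 0 := by
    rw [Matrix.conjTranspose_eq_transpose_of_trivial, Matrix.transpose_transpose, h]
  have := Matrix.conjTranspose_mul_self_eq_zero.mp h2
  simpa using congrArg Matrix.transpose this

/-- Let `A = Bᵀ B`, `0 < μ < 2 / λ_max(A)`, and `Ap` the Moore–Penrose pseudoinverse of
`A`. If `C 0 = 0`, then the iteration `C (α+1) = (I - μ A) (C α) + μ Bᵀ b` converges to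
`Ap Bᵀ b`, which is the solution of `A X = Bᵀ b` of minimum Euclidean norm. -/
theorem ipia_converges_to_min_norm_solution
    (n m : ℕ) (B : Matrix (Fin n) (Fin m) ℝ) (b : Fin n → ℝ)
    (A Ap : Matrix (Fin m) (Fin m) ℝ) (hAdef : A = Bᵀ * B)
    (hp1 : A * Ap * A = A) (hp2 : Ap * A * Ap = Ap)
    (hp3 : (A * Ap)ᵀ = A * Ap) (hp4 : (Ap * A)ᵀ = Ap * A)
    (μ lmax : ℝ) (hlmax_pos : 0 < lmax)
    (hmax_eig : ∃ v : Fin m → ℝ, v ≠ 0 ∧ A.mulVec v = lmax • v)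
    (hmax : ∀ (l : ℝ) (v : Fin m → ℝ), v ≠ 0 → A.mulVec v = l • v → l ≤ lmax)
    (hμ0 : 0 < μ) (hμ2 : μ < 2 / lmax)
    (C : ℕ → (Fin m → ℝ)) (hC0 : C 0 = 0)
    (hC : ∀ α : ℕ, C (α + 1) = (1 - μ • A).mulVec (C α) + μ • Bᵀ.mulVec b) :
    Filter.Tendsto C Filter.atTop (nhds (Ap.mulVec (Bᵀ.mulVec b))) ∧
    A.mulVec (Ap.mulVec (Bᵀ.mulVec b)) = Bᵀ.mulVec b ∧
    (∀ X : Fin m → ℝ, A.mulVec X = Bᵀ.mulVec b →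
      Real.sqrt (∑ i, (Ap.mulVec (Bᵀ.mulVec b)) i ^ 2) ≤ Real.sqrt (∑ i, X i ^ 2)) := by
  have hAsymm : Aᵀ = A := by rw [hAdef, Matrix.transpose_mul, Matrix.transpose_transpose]
  set w : Fin m → ℝ := Bᵀ.mulVec b with hw
  set Y : Fin m → ℝ := Ap.mulVec w with hY
  clear_value w Y
  -- range fact : A * Ap * Bᵀ = Bᵀ
  have hz : (1 - A * Ap) * A = 0 := by
    rw [Matrix.sub_mul, Matrix.one_mul, hp1, sub_self]
  have hM : ((1 - A * Ap) * Bᵀ) * ((1 - A * Ap) * Bᵀ)ᵀ = 0 := by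
    rw [Matrix.transpose_mul, Matrix.transpose_transpose]
    have e : (1 - A * Ap) * Bᵀ * (B * (1 - A * Ap)ᵀ) = ((1 - A * Ap) * A) * (1 - A * Ap)ᵀ := by
      rw [hAdef]; simp only [Matrix.mul_assoc]
    rw [e, hz, Matrix.zero_mul]
  have hBr : A * Ap * Bᵀ = Bᵀ := by
    have h0 := aux_mul_transpose_self_eq_zero _ hM
    rw [Matrix.sub_mul, Matrix.one_mul, sub_eq_zero] at h0
    exact h0.symm
  have hsol : A.mulVec Y = w := by
    rw [hY, hw, Matrix.mulVec_mulVec, Matrix.mulVec_mulVec, hBr]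
  -- fixed point
  have hfix : (1 - μ • A).mulVec Y + μ • w = Y := by
    rw [Matrix.sub_mulVec, Matrix.one_mulVec, Matrix.smul_mulVec, hsol,
      sub_add_cancel]
  -- closed form
  have hclosed : ∀ α, C α = Y - ((1 - μ • A) ^ α).mulVec Y := by
    intro α
    induction α with
    | zero => simp [hC0, Matrix.one_mulVec]
    | succ k ih =>
      rw [hC k, ih, Matrix.mulVec_sub, Matrix.mulVec_mulVec, ← pow_succ',
        sub_add_eq_add_sub, hfix]
  -- spectral setup
  have hherm : A.IsHermitian := by
    rw [Matrix.IsHermitian, Matrix.conjTranspose_eq_transpose_of_trivial, hAsymm]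
  set ev := hherm.eigenvalues with hevdef
  set vb := hherm.eigenvectorBasis with hvbdef
  have hev : ∀ i, A *ᵥ (vb i : Fin m → ℝ) = ev i • (vb i : Fin m → ℝ) := fun i =>
    hherm.mulVec_eigenvectorBasis i
  have hunit : ∀ i, (vb i : Fin m → ℝ) ⬝ᵥ (vb i : Fin m → ℝ) = 1 := by
    intro i
    have h1 : ‖vb i‖ = 1 := vb.orthonormal.1 i
    have h2 : (inner ℝ (vb i) (vb i) : ℝ) = 1 := by
      rw [real_inner_self_eq_norm_mul_norm, h1, one_mul]
    rw [PiLp.inner_apply] at h2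
    simpa [dotProduct, sq] using h2
  have hnz : ∀ i, (vb i : Fin m → ℝ) ≠ 0 := by
    intro i h
    have := hunit i
    rw [h, zero_dotProduct] at this
    exact zero_ne_one this
  have hnn : ∀ i, 0 ≤ ev i := by
    intro i
    have h1 : (vb i : Fin m → ℝ) ⬝ᵥ (A *ᵥ (vb i : Fin m → ℝ)) = ev i := by
      rw [hev i, dotProduct_smul, hunit i, smul_eq_mul, mul_one]
    have h2 : (vb i : Fin m → ℝ) ⬝ᵥ (A *ᵥ (vb i : Fin m → ℝ))
        = (B *ᵥ (vb i : Fin m → ℝ)) ⬝ᵥ (B *ᵥ (vb i : Fin m → ℝ)) := by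
      rw [hAdef, ← Matrix.mulVec_mulVec, Matrix.dotProduct_mulVec, Matrix.vecMul_transpose]
    rw [← h1, h2]
    exact Finset.sum_nonneg fun j _ => mul_self_nonneg _
  -- Y is in the range of A
  have hApA : Ap * A = A * Apᵀ := by
    conv_lhs => rw [← hp4]
    rw [Matrix.transpose_mul, hAsymm]
  have hYz : ∃ z, Y = A *ᵥ z := by
    refine ⟨(Apᵀ * Ap) *ᵥ w, ?_⟩
    have h5 : Ap = A * (Apᵀ * Ap) := by
      calc Ap = Ap * A * Ap := hp2.symm
        _ = (A * Apᵀ) * Ap := by rw [hApA]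
        _ = A * (Apᵀ * Ap) := Matrix.mul_assoc _ _ _
    rw [hY, Matrix.mulVec_mulVec]
    conv_lhs => rw [h5]
  have hc0 : ∀ i, ev i = 0 → (vb i : Fin m → ℝ) ⬝ᵥ Y = 0 := by
    intro i h0
    obtain ⟨z, hzz⟩ := hYz
    have hvA : (vb i : Fin m → ℝ) ᵥ* A = A *ᵥ (vb i : Fin m → ℝ) := by
      rw [← Matrix.mulVec_transpose, hAsymm]
    rw [hzz, Matrix.dotProduct_mulVec, hvA, hev i, h0, zero_smul, zero_dotProduct]
  have hrepr : ∀ i, (vb.repr (WithLp.toLp 2 Y) i : ℝ) = (vb i : Fin m → ℝ) ⬝ᵥ Y := by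
    intro i
    rw [vb.repr_apply_apply, PiLp.inner_apply]
    simp [dotProduct, mul_comm]
  have hsum : ∑ i, vb.repr (WithLp.toLp 2 Y) i • (vb i : Fin m → ℝ) = Y := by
    have := congrArg WithLp.ofLp (vb.sum_repr (WithLp.toLp 2 Y))
    simpa using this
  have hTα : ∀ (i) (α : ℕ),
      ((1 - μ • A) ^ α) *ᵥ (vb i : Fin m → ℝ) = (1 - μ * ev i) ^ α • (vb i : Fin m → ℝ) := by
    intro i α
    induction α with
    | zero => simp [Matrix.one_mulVec]
    | succ k ih =>
      have hsub : (vb i : Fin m → ℝ) - (μ * ev i) • (vb i : Fin m → ℝ)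
          = (1 - μ * ev i) • (vb i : Fin m → ℝ) := by rw [sub_smul, one_smul]
      rw [pow_succ', ← Matrix.mulVec_mulVec, ih, Matrix.mulVec_smul, Matrix.sub_mulVec,
        Matrix.one_mulVec, Matrix.smul_mulVec, hev i, smul_smul, hsub, smul_smul,
        ← pow_succ]
  -- convergence of the error term
  have hten0 : Filter.Tendsto (fun α => ((1 - μ • A) ^ α) *ᵥ Y) Filter.atTop
      (nhds (0 : Fin m → ℝ)) := by
    have key : ∀ α, ((1 - μ • A) ^ α) *ᵥ Y
        = ∑ i, (vb.repr (WithLp.toLp 2 Y) i * (1 - μ * ev i) ^ α) • (vb i : Fin m → ℝ) := by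
      intro α
      conv_lhs => rw [← hsum]
      rw [← Matrix.mulVecLin_apply, map_sum]
      refine Finset.sum_congr rfl fun i _ => ?_
      rw [LinearMap.map_smul, Matrix.mulVecLin_apply, hTα i α, smul_smul]
    simp only [key]
    have h0 : (0 : Fin m → ℝ) = ∑ i : Fin m, (0 : Fin m → ℝ) := by simp
    rw [h0]
    refine tendsto_finset_sum _ fun i _ => ?_
    by_cases hz0 : ev i = 0
    · have : vb.repr (WithLp.toLp 2 Y) i = 0 := by rw [hrepr i, hc0 i hz0]
      simp [this]
    · have hpos : 0 < ev i := lt_of_le_of_ne (hnn i) (Ne.symm hz0)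
      have hle : ev i ≤ lmax := hmax _ _ (hnz i) (hev i)
      have hml : μ * lmax < 2 := (lt_div_iff₀ hlmax_pos).mp hμ2
      have hme : μ * ev i ≤ μ * lmax := mul_le_mul_of_nonneg_left hle hμ0.le
      have habs : ‖(1 - μ * ev i : ℝ)‖ < 1 := by
        rw [Real.norm_eq_abs, abs_lt]
        constructor
        · linarith
        · nlinarith [mul_pos hμ0 hpos]
      have h1 : Filter.Tendsto (fun α : ℕ => (1 - μ * ev i) ^ α) Filter.atTop (nhds 0) :=
        tendsto_pow_atTop_nhds_zero_of_norm_lt_one habs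
      have h2 := (h1.const_mul (vb.repr (WithLp.toLp 2 Y) i)).smul_const ((vb i : Fin m → ℝ))
      simpa using h2
  have htend : Filter.Tendsto C Filter.atTop (nhds Y) := by
    have hfun : C = fun α => Y - ((1 - μ • A) ^ α) *ᵥ Y := funext hclosed
    rw [hfun]
    simpa using tendsto_const_nhds.sub hten0
  refine ⟨htend, hsol, ?_⟩
  -- minimal norm
  intro X hX
  apply Real.sqrt_le_sqrt
  have hYX : Y = (Ap * A) *ᵥ X := by rw [hY, ← hX, Matrix.mulVec_mulVec]
  have hPP : (Ap * A) * (Ap * A) = Ap * A := by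
    calc (Ap * A) * (Ap * A) = (Ap * A * Ap) * A := by
          simp only [Matrix.mul_assoc]
      _ = Ap * A := by rw [hp2]
  have hYP : Y ᵥ* (Ap * A) = Y := by
    rw [← Matrix.mulVec_transpose, hp4, hYX, Matrix.mulVec_mulVec, hPP]
  have horth : Y ⬝ᵥ Y = Y ⬝ᵥ X := by
    conv_lhs => rw [hYX]
    rw [Matrix.dotProduct_mulVec, ← hYX, hYP]
  have hsq : ∀ v : Fin m → ℝ, ∑ i, v i ^ 2 = v ⬝ᵥ v := by
    intro v; simp [dotProduct, sq]
  rw [hsq, hsq]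
  have hnonneg : 0 ≤ (X - Y) ⬝ᵥ (X - Y) :=
    Finset.sum_nonneg fun j _ => mul_self_nonneg _
  have hXY : X ⬝ᵥ Y = Y ⬝ᵥ Y := by rw [dotProduct_comm, ← horth]
  have hexp : (X - Y) ⬝ᵥ (X - Y) = X ⬝ᵥ X - Y ⬝ᵥ Y := by
    rw [sub_dotProduct, dotProduct_sub, dotProduct_sub, hXY, horth]
    ring
  linarith
end
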